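/- Let l, u ∈ ℝ^k with 0 ≤ l_i ≤ u_i for all i, Σ_i l_i ≤ 1 ≤ Σ_i u_i, and let v ∈ ℝ^k satisfy v_1 ≥ v_2 ≥ … ≥ v_k. Let r be the smallest index j such that Σ_{i ≤ j} u_i + Σ_{i > j} l_i ≥ 1, and define p* by p*_i = u_i for i < r, p*_i = l_i for i > r, and p*_r = 1 − Σ_{i < r} u_i − Σ_{i > r} l_i. Then p* is feasible (l ≤ p* ≤ u componentwise and Σ_i p*_i = 1), and p* maximizes Σ_i p_i v_i over all p with l ≤ p ≤ u and Σ_i p_i = 1. -/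

import Mathlib

/-- **Order-maximizing (threshold) distribution in bounded-parameter MDPs.**
Given componentwise bounds `0 ≤ l ≤ u` with `Σ l ≤ 1 ≤ Σ u` and values
`v_1 ≥ v_2 ≥ … ≥ v_k` (i.e. `v` antitone in the index), let `r` be the smallest index `j`
with `Σ_{i ≤ j} u_i + Σ_{i > j} l_i ≥ 1`, and define `p*` by assigning `u_i` below `r`,
`l_i` above `r`, and the remaining mass at `r`.  Then `p*` is feasible and maximizes
`⟨p, v⟩` over the box `[l, u]` intersected with the probability simplex. -/
theorem order_maximizing_threshold
    (k : ℕ) (l u v : Fin k → ℝ)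
    (hl0 : ∀ i, 0 ≤ l i) (hlu : ∀ i, l i ≤ u i)
    (hsl : ∑ i, l i ≤ 1) (hsu : 1 ≤ ∑ i, u i)
    (hv : Antitone v)
    (r : Fin k)
    (hr : 1 ≤ (∑ i ∈ Finset.univ.filter (fun i => i ≤ r), u i)
            + ∑ i ∈ Finset.univ.filter (fun i => r < i), l i)
    (hrmin : ∀ j : Fin k, j < r →
      (∑ i ∈ Finset.univ.filter (fun i => i ≤ j), u i)
        + (∑ i ∈ Finset.univ.filter (fun i => j < i), l i) < 1) :
    let pstar : Fin k → ℝ := fun i =>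
      if i < r then u i
      else if r < i then l i
      else 1 - (∑ j ∈ Finset.univ.filter (fun j => j < r), u j)
             - (∑ j ∈ Finset.univ.filter (fun j => r < j), l j)
    (∀ i, l i ≤ pstar i ∧ pstar i ≤ u i) ∧ (∑ i, pstar i) = 1 ∧
      ∀ p : Fin k → ℝ, (∀ i, l i ≤ p i ∧ p i ≤ u i) → (∑ i, p i) = 1 →
        (∑ i, p i * v i) ≤ ∑ i, pstar i * v i := by
  intro pstar
  set A := ∑ j ∈ Finset.univ.filter (fun j => j < r), u j with hAdef
  set B := ∑ j ∈ Finset.univ.filter (fun j => r < j), l j with hBdef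
  have hrnot : r ∉ Finset.univ.filter (fun i : Fin k => i < r) := by simp
  have hins : Finset.univ.filter (fun i : Fin k => i ≤ r)
      = insert r (Finset.univ.filter (fun i => i < r)) := by
    ext i; simp [le_iff_lt_or_eq, or_comm]
  have hr' : 1 ≤ u r + A + B := by
    rw [hins, Finset.sum_insert hrnot] at hr
    linarith
  have hsplit : ∀ f : Fin k → ℝ, ∑ i, f i
      = (∑ i ∈ Finset.univ.filter (fun i => i < r), f i) + f r
        + ∑ i ∈ Finset.univ.filter (fun i => r < i), f i := by
    intro f
    have := Finset.sum_filter_add_sum_filter_not Finset.univ (fun i : Fin k => i ≤ r) f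
    have hne : Finset.univ.filter (fun i : Fin k => ¬ i ≤ r)
        = Finset.univ.filter (fun i => r < i) := by
      ext i; simp [not_le]
    rw [hne, hins, Finset.sum_insert hrnot] at this
    linarith
  have hlow : A + (l r + B) ≤ 1 := by
    rcases Nat.eq_zero_or_pos r.val with h0 | hpos
    · have hA0 : A = 0 := by
        rw [hAdef]; apply Finset.sum_eq_zero
        intro i hi
        simp only [Finset.mem_filter, Finset.mem_univ, true_and, Fin.lt_def] at hi
        omega
      have hsum : ∑ i, l i = l r + B := by
        rw [hsplit l]
        have : ∑ i ∈ Finset.univ.filter (fun i => i < r), l i = 0 := by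
          apply Finset.sum_eq_zero
          intro i hi
          simp only [Finset.mem_filter, Finset.mem_univ, true_and, Fin.lt_def] at hi
          omega
        rw [this]; ring
      rw [hA0]; linarith [hsl, hsum.symm.le]
    · set j : Fin k := ⟨r.val - 1, lt_trans (by omega) r.isLt⟩ with hj
      have hjr : j < r := by simp [hj, Fin.lt_def]; omega
      have h1 : Finset.univ.filter (fun i : Fin k => i ≤ j)
          = Finset.univ.filter (fun i => i < r) := by
        ext i; simp only [Finset.mem_filter, Finset.mem_univ, true_and,
          Fin.le_def, Fin.lt_def, hj]; omega
      have h2 : Finset.univ.filter (fun i : Fin k => j < i)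
          = insert r (Finset.univ.filter (fun i => r < i)) := by
        ext i; simp only [Finset.mem_filter, Finset.mem_univ, true_and,
          Finset.mem_insert, Fin.lt_def, Fin.ext_iff, hj]; omega
      have := hrmin j hjr
      rw [h1, h2, Finset.sum_insert (by simp)] at this
      linarith
  have hfeas : ∀ i, l i ≤ pstar i ∧ pstar i ≤ u i := by
    intro i
    rcases lt_trichotomy i r with h | h | h
    · simp only [pstar, if_pos h]
      exact ⟨hlu i, le_refl _⟩
    · subst h
      have e3 : pstar i = 1 - A - B := by simp [pstar, hAdef, hBdef]
      rw [e3]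
      constructor <;> linarith
    · have h1 : ¬ i < r := asymm h
      simp only [pstar, if_neg h1, if_pos h]
      exact ⟨le_refl _, hlu i⟩
  have hpsum : (∑ i, pstar i) = 1 := by
    rw [hsplit pstar]
    have e1 : ∑ i ∈ Finset.univ.filter (fun i => i < r), pstar i = A := by
      rw [hAdef]; apply Finset.sum_congr rfl
      intro i hi
      simp only [Finset.mem_filter, Finset.mem_univ, true_and] at hi
      simp [pstar, hi]
    have e2 : ∑ i ∈ Finset.univ.filter (fun i => r < i), pstar i = B := by
      rw [hBdef]; apply Finset.sum_congr rfl
      intro i hi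
      simp only [Finset.mem_filter, Finset.mem_univ, true_and] at hi
      simp [pstar, asymm hi, hi]
    have e3 : pstar r = 1 - A - B := by
      simp [pstar, hAdef, hBdef]
    rw [e1, e2, e3]; ring
  refine ⟨hfeas, hpsum, ?_⟩
  intro p hp hp1
  have hd0 : ∑ i, (pstar i - p i) = 0 := by
    rw [Finset.sum_sub_distrib, hpsum, hp1]; ring
  have hterm : ∀ i ∈ Finset.univ, 0 ≤ (pstar i - p i) * (v i - v r) := by
    intro i _
    rcases lt_trichotomy i r with h | h | h
    · have h1 : pstar i = u i := by simp [pstar, h]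
      have h2 : v r ≤ v i := hv h.le
      have h3 : p i ≤ u i := (hp i).2
      apply mul_nonneg <;> linarith
    · subst h; simp
    · have h1 : pstar i = l i := by simp [pstar, asymm h, h]
      have h2 : v i ≤ v r := hv h.le
      have h3 : l i ≤ p i := (hp i).1
      have := mul_nonneg (a := p i - pstar i) (b := v r - v i) (by linarith) (by linarith)
      nlinarith
  have hkey : 0 ≤ ∑ i, (pstar i - p i) * v i := by
    have h1 : ∑ i, (pstar i - p i) * v i
        = ∑ i, (pstar i - p i) * (v i - v r) + (∑ i, (pstar i - p i)) * v r := by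
      rw [Finset.sum_mul, ← Finset.sum_add_distrib]
      apply Finset.sum_congr rfl; intros; ring
    rw [h1, hd0]
    have := Finset.sum_nonneg hterm
    linarith
  have h2 : ∑ i, (pstar i - p i) * v i = ∑ i, pstar i * v i - ∑ i, p i * v i := by
    rw [← Finset.sum_sub_distrib]; apply Finset.sum_congr rfl; intros; ring
  linarith
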